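/- Let |φ₁⟩, |φ₂⟩ be unit vectors in a Hilbert space with |⟨φ₁|φ₂⟩|² ≥ p for some p ∈ (0,1]. Let ω = e^{iπ/3} and R_i = ω|φ_i⟩⟨φ_i| + (I − |φ_i⟩⟨φ_i|) for i = 1,2. Define unitaries recursively by U₀ = I and U_{m+1} = U_m R₁ U_m† R₂ U_m. Then for every m ∈ ℕ, |⟨φ₂| U_m |φ₁⟩|² ≥ 1 − (1 − p)^{3^m}. -/

import Mathlib

/-- The recursively defined unitaries of Grover's π/3 fixed-point amplitude
amplification: `U₀ = I`, `U_{m+1} = U_m R₁ U_m† R₂ U_m`. -/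
noncomputable def groverSeq {H : Type*} [NormedAddCommGroup H] [InnerProductSpace ℂ H]
    [CompleteSpace H] (R₁ R₂ : H →L[ℂ] H) : ℕ → (H →L[ℂ] H)
  | 0 => 1
  | m + 1 =>
      groverSeq R₁ R₂ m ∘L R₁ ∘L
        ContinuousLinearMap.adjoint (groverSeq R₁ R₂ m) ∘L R₂ ∘L groverSeq R₁ R₂ m

/-- Grover's π/3 fixed-point amplitude amplification: if `|⟨φ₁|φ₂⟩|² ≥ p` and
`R_i = e^{iπ/3}|φ_i⟩⟨φ_i| + (I − |φ_i⟩⟨φ_i|)`, then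
`|⟨φ₂|U_m|φ₁⟩|² ≥ 1 − (1 − p)^{3^m}` for every `m`. -/
private lemma Rop_apply {H : Type*} [NormedAddCommGroup H] [InnerProductSpace ℂ H]
    (φ : H) (ω : ℂ) (x : H) :
    (ω • ((innerSL ℂ φ).smulRight φ) + (1 - (innerSL ℂ φ).smulRight φ)) x
      = x + ((ω - 1) * (inner ℂ φ x : ℂ)) • φ := by
  simp only [ContinuousLinearMap.add_apply, ContinuousLinearMap.smul_apply,
    ContinuousLinearMap.sub_apply, ContinuousLinearMap.one_apply,
    ContinuousLinearMap.smulRight_apply, innerSL_apply_apply, sub_mul, one_mul, sub_smul, smul_smul]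
  abel

private lemma Rop_adjoint {H : Type*} [NormedAddCommGroup H] [InnerProductSpace ℂ H]
    [CompleteSpace H] (φ : H) (ω : ℂ) :
    ContinuousLinearMap.adjoint
        (ω • ((innerSL ℂ φ).smulRight φ) + (1 - (innerSL ℂ φ).smulRight φ))
      = (starRingEnd ℂ ω) • ((innerSL ℂ φ).smulRight φ) + (1 - (innerSL ℂ φ).smulRight φ) := by
  symm
  rw [ContinuousLinearMap.eq_adjoint_iff]
  intro x y
  rw [Rop_apply, Rop_apply]
  simp only [inner_add_left, inner_add_right, inner_smul_left, inner_smul_right, map_mul,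
    map_sub, map_neg, map_one, Complex.conj_conj, RingHom.id_apply, inner_conj_symm]
  ring

private lemma Rop_unitary {H : Type*} [NormedAddCommGroup H] [InnerProductSpace ℂ H]
    [CompleteSpace H] (φ : H) (hφ : ‖φ‖ = 1) (ω : ℂ) (hω : ‖ω‖ = 1) :
    (ω • ((innerSL ℂ φ).smulRight φ) + (1 - (innerSL ℂ φ).smulRight φ))
      ∈ unitary (H →L[ℂ] H) := by
  have hφφ : (inner ℂ φ φ : ℂ) = 1 := by
    rw [inner_self_eq_norm_sq_to_K, hφ]; norm_num
  have hωω : (starRingEnd ℂ) ω * ω = 1 := by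
    rw [mul_comm, Complex.mul_conj]
    norm_cast
    rw [Complex.normSq_eq_norm_sq, hω]; norm_num
  constructor
  · ext x
    rw [ContinuousLinearMap.star_eq_adjoint, Rop_adjoint, ContinuousLinearMap.mul_apply,
      Rop_apply, Rop_apply, ContinuousLinearMap.one_apply]
    simp only [inner_add_right, inner_smul_right, hφφ, mul_one]
    match_scalars
    · ring
    · linear_combination (inner ℂ φ x : ℂ) * hωω
  · ext x
    rw [ContinuousLinearMap.star_eq_adjoint, Rop_adjoint, ContinuousLinearMap.mul_apply,
      Rop_apply, Rop_apply, ContinuousLinearMap.one_apply]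
    simp only [inner_add_right, inner_smul_right, hφφ, mul_one]
    match_scalars
    · ring
    · linear_combination (inner ℂ φ x : ℂ) * hωω


private lemma groverSeq_unitary {H : Type*} [NormedAddCommGroup H] [InnerProductSpace ℂ H]
    [CompleteSpace H] (R₁ R₂ : H →L[ℂ] H) (h1 : R₁ ∈ unitary (H →L[ℂ] H))
    (h2 : R₂ ∈ unitary (H →L[ℂ] H)) : ∀ m, groverSeq R₁ R₂ m ∈ unitary (H →L[ℂ] H) := by
  intro m
  induction m with
  | zero => exact (unitary (H →L[ℂ] H)).one_mem
  | succ m ih =>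
    show groverSeq R₁ R₂ m ∘L R₁ ∘L ContinuousLinearMap.adjoint (groverSeq R₁ R₂ m) ∘L R₂ ∘L
        groverSeq R₁ R₂ m ∈ _
    rw [← ContinuousLinearMap.star_eq_adjoint]
    exact mul_mem ih (mul_mem h1 (mul_mem (Unitary.star_mem ih) (mul_mem h2 ih)))

private lemma step_formula {H : Type*} [NormedAddCommGroup H] [InnerProductSpace ℂ H]
    [CompleteSpace H] (φ₁ φ₂ : H) (h₁ : ‖φ₁‖ = 1) (h₂ : ‖φ₂‖ = 1) (ω : ℂ)
    (U : H →L[ℂ] H) (hU : U ∈ unitary (H →L[ℂ] H)) :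
    (inner ℂ φ₂ ((U ∘L (ω • ((innerSL ℂ φ₁).smulRight φ₁) + (1 - (innerSL ℂ φ₁).smulRight φ₁)) ∘L
        ContinuousLinearMap.adjoint U ∘L
        (ω • ((innerSL ℂ φ₂).smulRight φ₂) + (1 - (innerSL ℂ φ₂).smulRight φ₂)) ∘L U) φ₁) : ℂ)
      = (inner ℂ φ₂ (U φ₁) : ℂ) * ((2*ω - 1)
          + (ω-1)^2 * ((inner ℂ φ₂ (U φ₁) : ℂ) * (starRingEnd ℂ) (inner ℂ φ₂ (U φ₁) : ℂ))) := by
  have hφ₁φ₁ : (inner ℂ φ₁ φ₁ : ℂ) = 1 := by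
    rw [inner_self_eq_norm_sq_to_K, h₁]; norm_num
  have hφ₂φ₂ : (inner ℂ φ₂ φ₂ : ℂ) = 1 := by
    rw [inner_self_eq_norm_sq_to_K, h₂]; norm_num
  have hadj1 : ∀ x : H, ContinuousLinearMap.adjoint U (U x) = x := by
    intro x
    have h := hU.1
    calc ContinuousLinearMap.adjoint U (U x) = (star U * U) x := by
          rw [ContinuousLinearMap.star_eq_adjoint]; rfl
      _ = x := by rw [h]; rfl
  have hadj2 : ∀ x : H, U (ContinuousLinearMap.adjoint U x) = x := by
    intro x
    have h := hU.2
    calc U (ContinuousLinearMap.adjoint U x) = (U * star U) x := by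
          rw [ContinuousLinearMap.star_eq_adjoint]; rfl
      _ = x := by rw [h]; rfl
  set a : ℂ := inner ℂ φ₂ (U φ₁) with ha
  have hinner : (inner ℂ φ₁ (ContinuousLinearMap.adjoint U φ₂) : ℂ) = (starRingEnd ℂ) a := by
    rw [ContinuousLinearMap.adjoint_inner_right, ← inner_conj_symm]
  have e2 : ContinuousLinearMap.adjoint U (U φ₁ + ((ω-1) * a) • φ₂)
      = φ₁ + ((ω-1) * a) • ContinuousLinearMap.adjoint U φ₂ := by
    rw [map_add, map_smul, hadj1]
  have e3 : (ω • ((innerSL ℂ φ₁).smulRight φ₁) + (1 - (innerSL ℂ φ₁).smulRight φ₁))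
        (φ₁ + ((ω-1) * a) • ContinuousLinearMap.adjoint U φ₂)
      = (ω + (ω-1)^2 * (a * (starRingEnd ℂ) a)) • φ₁
        + ((ω-1) * a) • ContinuousLinearMap.adjoint U φ₂ := by
    rw [Rop_apply]
    simp only [inner_add_right, inner_smul_right, hφ₁φ₁, hinner]
    match_scalars <;> ring
  rw [ContinuousLinearMap.comp_apply, ContinuousLinearMap.comp_apply,
    ContinuousLinearMap.comp_apply, ContinuousLinearMap.comp_apply, Rop_apply φ₂ ω (U φ₁),
    ← ha, e2, e3, map_add, map_smul, map_smul, hadj2]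
  simp only [inner_add_right, inner_smul_right, hφ₂φ₂, ← ha]
  ring

private lemma keycalc (ω a : ℂ) (hconj : (starRingEnd ℂ) ω = 1 - ω) (hrel : ω^2 - ω + 1 = 0) :
    1 - Complex.normSq (a * ((2*ω - 1) + (ω-1)^2 * (a * (starRingEnd ℂ) a)))
      = (1 - Complex.normSq a)^3 := by
  rw [← Complex.ofReal_inj]
  push_cast
  rw [← Complex.mul_conj, ← Complex.mul_conj]
  simp only [map_mul, map_add, map_sub, map_one, map_pow, map_ofNat, Complex.conj_conj, hconj]
  linear_combination (-(a^3*((starRingEnd ℂ) a)^3)*ω^2 + a^3*((starRingEnd ℂ) a)^3*ω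
    + 4*a*((starRingEnd ℂ) a) - 4*a^2*((starRingEnd ℂ) a)^2 + a^3*((starRingEnd ℂ) a)^3) * hrel


theorem pi_three_amplitude_amplification
    {H : Type*} [NormedAddCommGroup H] [InnerProductSpace ℂ H] [CompleteSpace H]
    (φ₁ φ₂ : H) (h₁ : ‖φ₁‖ = 1) (h₂ : ‖φ₂‖ = 1)
    (p : ℝ) (hp : p ∈ Set.Ioc (0 : ℝ) 1)
    (hover : p ≤ ‖(inner ℂ φ₁ φ₂ : ℂ)‖ ^ 2)
    (R₁ R₂ : H →L[ℂ] H)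
    (hR₁ : R₁ = Complex.exp (Real.pi / 3 * Complex.I) • ((innerSL ℂ φ₁).smulRight φ₁) +
      (1 - (innerSL ℂ φ₁).smulRight φ₁))
    (hR₂ : R₂ = Complex.exp (Real.pi / 3 * Complex.I) • ((innerSL ℂ φ₂).smulRight φ₂) +
      (1 - (innerSL ℂ φ₂).smulRight φ₂)) :
    ∀ m : ℕ, 1 - (1 - p) ^ (3 ^ m) ≤ ‖(inner ℂ φ₂ ((groverSeq R₁ R₂ m) φ₁) : ℂ)‖ ^ 2 := by
  set ω : ℂ := Complex.exp (Real.pi / 3 * Complex.I) with hωdef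
  have hπ : ((Real.pi : ℂ) / 3 * Complex.I) = ((Real.pi / 3 : ℝ) : ℂ) * Complex.I := by
    push_cast; ring
  have hωval : ω = ((1/2 : ℝ) : ℂ) + ((Real.sqrt 3 / 2 : ℝ) : ℂ) * Complex.I := by
    rw [hωdef, hπ, Complex.exp_mul_I, ← Complex.ofReal_cos, ← Complex.ofReal_sin,
      Real.cos_pi_div_three, Real.sin_pi_div_three]
  have hωnorm : ‖ω‖ = 1 := by
    rw [hωdef, hπ]
    exact Complex.norm_exp_ofReal_mul_I _
  have hconj : (starRingEnd ℂ) ω = 1 - ω := by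
    rw [hωval]
    simp only [map_add, map_mul, Complex.conj_I, Complex.conj_ofReal]
    push_cast
    ring
  have hrel : ω ^ 2 - ω + 1 = 0 := by
    have h1 : ω * (starRingEnd ℂ) ω = 1 := by
      rw [Complex.mul_conj]
      norm_cast
      rw [Complex.normSq_eq_norm_sq, hωnorm]; norm_num
    rw [hconj] at h1
    linear_combination -h1
  have hU1 : R₁ ∈ unitary (H →L[ℂ] H) := hR₁ ▸ Rop_unitary φ₁ h₁ ω hωnorm
  have hU2 : R₂ ∈ unitary (H →L[ℂ] H) := hR₂ ▸ Rop_unitary φ₂ h₂ ω hωnorm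
  have hUm := groverSeq_unitary R₁ R₂ hU1 hU2
  -- the norm of a_m is at most 1
  have hle1 : ∀ m, ‖(inner ℂ φ₂ ((groverSeq R₁ R₂ m) φ₁) : ℂ)‖ ^ 2 ≤ 1 := by
    intro m
    have hnormU : ‖(groverSeq R₁ R₂ m) φ₁‖ = 1 := by
      have hadj1 : ∀ x : H, ContinuousLinearMap.adjoint (groverSeq R₁ R₂ m)
          ((groverSeq R₁ R₂ m) x) = x := by
        intro x
        have h := (hUm m).1
        calc ContinuousLinearMap.adjoint (groverSeq R₁ R₂ m) ((groverSeq R₁ R₂ m) x)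
            = (star (groverSeq R₁ R₂ m) * groverSeq R₁ R₂ m) x := by
              rw [ContinuousLinearMap.star_eq_adjoint]; rfl
          _ = x := by rw [h]; rfl
      have e : (inner ℂ ((groverSeq R₁ R₂ m) φ₁) ((groverSeq R₁ R₂ m) φ₁) : ℂ)
          = (inner ℂ φ₁ φ₁ : ℂ) := by
        rw [← ContinuousLinearMap.adjoint_inner_right, hadj1]
      rw [inner_self_eq_norm_sq_to_K, inner_self_eq_norm_sq_to_K] at e
      have e' : ‖(groverSeq R₁ R₂ m) φ₁‖ ^ 2 = ‖φ₁‖ ^ 2 := by exact_mod_cast e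
      nlinarith [norm_nonneg ((groverSeq R₁ R₂ m) φ₁)]
    have := norm_inner_le_norm (𝕜 := ℂ) φ₂ ((groverSeq R₁ R₂ m) φ₁)
    rw [h₂, hnormU] at this
    nlinarith [norm_nonneg (inner ℂ φ₂ ((groverSeq R₁ R₂ m) φ₁) : ℂ)]
  have hcube : ∀ m, ‖(inner ℂ φ₂ ((groverSeq R₁ R₂ (m+1)) φ₁) : ℂ)‖ ^ 2
      = 1 - (1 - ‖(inner ℂ φ₂ ((groverSeq R₁ R₂ m) φ₁) : ℂ)‖ ^ 2) ^ 3 := by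
    intro m
    have hstep : (inner ℂ φ₂ ((groverSeq R₁ R₂ (m+1)) φ₁) : ℂ)
        = (inner ℂ φ₂ ((groverSeq R₁ R₂ m) φ₁) : ℂ) * ((2*ω - 1)
            + (ω-1)^2 * ((inner ℂ φ₂ ((groverSeq R₁ R₂ m) φ₁) : ℂ)
              * (starRingEnd ℂ) (inner ℂ φ₂ ((groverSeq R₁ R₂ m) φ₁) : ℂ))) := by
      have := step_formula φ₁ φ₂ h₁ h₂ ω (groverSeq R₁ R₂ m) (hUm m)
      rw [← hR₁, ← hR₂] at this
      exact this
    have hn : ∀ z : ℂ, ‖z‖ ^ 2 = Complex.normSq z := by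
      intro z
      rw [Complex.sq_norm]
    rw [hn, hn, hstep]
    have := keycalc ω (inner ℂ φ₂ ((groverSeq R₁ R₂ m) φ₁) : ℂ) hconj hrel
    linarith
  intro m
  induction m with
  | zero =>
    have h0 : (groverSeq R₁ R₂ 0) φ₁ = φ₁ := rfl
    rw [h0]
    have hsym : ‖(inner ℂ φ₂ φ₁ : ℂ)‖ = ‖(inner ℂ φ₁ φ₂ : ℂ)‖ := norm_inner_symm φ₂ φ₁
    simp only [pow_zero, pow_one, hsym]
    linarith
  | succ m ih =>
    have hx1 := hle1 m
    have hnn : (0:ℝ) ≤ 1 - ‖(inner ℂ φ₂ ((groverSeq R₁ R₂ m) φ₁) : ℂ)‖ ^ 2 := by linarith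
    have hstep : (1 - ‖(inner ℂ φ₂ ((groverSeq R₁ R₂ m) φ₁) : ℂ)‖ ^ 2) ^ 3
        ≤ ((1 - p) ^ (3 ^ m)) ^ 3 :=
      pow_le_pow_left₀ hnn (by linarith) 3
    have hexp : ((1 - p) ^ (3 ^ m)) ^ 3 = (1 - p) ^ (3 ^ (m+1)) := by
      rw [← pow_mul, ← pow_succ]
    rw [hcube m]
    linarith [hstep, hexp ▸ hstep]
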